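/- arXiv:2208.06785 — 2 statements merged into one kernel-verified Lean document; each statement's English description precedes it below -/
import Mathlib

section
/- Let σ be the HMW strategy on S = ℝ, i.e. σ_0(dz) = f_0(z) dz and σ_n(x, dz) = f_n(z | x) dz for n ≥ 1 and x ∈ ℝ^n, where the densities f_n are given by the copula recursion. Then the coordinate process X = (X_1, X_2, ...) is conditionally identically distributed (c.i.d.) under P_σ. -/
open MeasureTheory ProbabilityTheory

namespace PredictiveBayes

variable {S : Type*} [MeasurableSpace S]

/-- The finite-dimensional distributions determined by a strategy `κ`:
`stratFDD κ n` is the law of `(X_1, …, X_n)` under `P_κ`. -/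
noncomputable def stratFDD (κ : ∀ n, Kernel (Fin n → S) S) : ∀ n, Measure (Fin n → S)
  | 0 => Measure.dirac (fun i : Fin 0 => i.elim0)
  | n + 1 => (stratFDD κ n).bind (fun x => ((κ n) x).map (Fin.snoc x))

/-- `P` is the Ionescu–Tulcea law `P_κ` of the strategy `κ`. -/
def IsStrategyLaw (κ : ∀ n, Kernel (Fin n → S) S) (P : Measure (ℕ → S)) : Prop :=
  ∀ n, P.map (fun ω (i : Fin n) => ω i) = stratFDD κ n

/-- The process `Y` is conditionally identically distributed (c.i.d.) under `P`. -/
def CID {Ω : Type*} [MeasurableSpace Ω] (P : Measure Ω) (Y : ℕ → Ω → S) : Prop :=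
  P.map (Y 1) = P.map (Y 0) ∧
  ∀ n m : ℕ, 1 ≤ n → n ≤ m → ∀ A : Set S, MeasurableSet A →
    (P[Set.indicator ((Y m) ⁻¹' A) (fun _ => (1 : ℝ)) |
        MeasurableSpace.comap (fun ω (i : Fin n) => Y i ω) inferInstance])
      =ᵐ[P]
    (P[Set.indicator ((Y n) ⁻¹' A) (fun _ => (1 : ℝ)) |
        MeasurableSpace.comap (fun ω (i : Fin n) => Y i ω) inferInstance])

/-- The copula recursion of Hahn–Martin–Walker. -/
noncomputable def hmwDensity (f0 : ℝ → ℝ) (c : ℕ → ℝ → ℝ → ℝ) :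
    ∀ n, (Fin n → ℝ) → ℝ → ℝ
  | 0 => fun _ z => f0 z
  | n + 1 => fun x z =>
      c (n + 1) (∫ t in Set.Iic z, hmwDensity f0 c n (Fin.init x) t)
          (∫ t in Set.Iic (x (Fin.last n)), hmwDensity f0 c n (Fin.init x) t) *
        hmwDensity f0 c n (Fin.init x) z

section AuxAll
open Set Filter Topology


section Density

variable {f : ℝ → ℝ}

lemma aux_integrable (hmeas : Measurable f) (hpos : ∀ z, 0 ≤ f z)
    (hnorm : ∫⁻ z, ENNReal.ofReal (f z) = 1) : Integrable f := by
  refine ⟨hmeas.aestronglyMeasurable, ?_⟩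
  rw [hasFiniteIntegral_iff_ofReal (Eventually.of_forall hpos), hnorm]
  exact ENNReal.one_lt_top

lemma aux_ofReal_setIntegral (hmeas : Measurable f) (hpos : ∀ z, 0 ≤ f z)
    (hnorm : ∫⁻ z, ENNReal.ofReal (f z) = 1) (s : Set ℝ) :
    ENNReal.ofReal (∫ t in s, f t) = ∫⁻ t in s, ENNReal.ofReal (f t) :=
  ofReal_integral_eq_lintegral_ofReal
    ((aux_integrable hmeas hpos hnorm).restrict)
    (Eventually.of_forall hpos)

lemma aux_lintegral_Iic_lt_one (hmeas : Measurable f) (hpos : ∀ z, 0 < f z)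
    (hnorm : ∫⁻ z, ENNReal.ofReal (f z) = 1) (z : ℝ) :
    ∫⁻ t in Set.Iic z, ENNReal.ofReal (f t) < 1 := by
  have hsplit : (∫⁻ t in Set.Iic z, ENNReal.ofReal (f t))
      + ∫⁻ t in Set.Ioi z, ENNReal.ofReal (f t) = 1 := by
    rw [← lintegral_union measurableSet_Ioi (Set.Iic_disjoint_Ioi le_rfl),
      Set.Iic_union_Ioi, setLIntegral_univ, hnorm]
  have hpos2 : 0 < ∫⁻ t in Set.Ioi z, ENNReal.ofReal (f t) := by
    rw [lintegral_pos_iff_support (hmeas.ennreal_ofReal)]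
    have : Function.support (fun t => ENNReal.ofReal (f t)) = Set.univ := by
      ext t; simp [Function.support, ENNReal.ofReal_eq_zero, not_le, hpos t]
    rw [Measure.restrict_apply' measurableSet_Ioi, this, Set.univ_inter]
    simp [Real.volume_Ioi]
  have hle : (∫⁻ t in Set.Iic z, ENNReal.ofReal (f t)) ≤ 1 := by
    rw [← hsplit]; exact le_self_add
  rcases lt_or_eq_of_le hle with h | h
  · exact h
  · exfalso
    rw [h] at hsplit
    have h0 : ∫⁻ t in Set.Ioi z, ENNReal.ofReal (f t) = 0 :=
      (ENNReal.add_right_inj ENNReal.one_ne_top).mp (by rw [hsplit, add_zero])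
    exact hpos2.ne' h0

end Density

section Density2
variable {f : ℝ → ℝ}

/-- The CDF. -/
noncomputable def auxF (f : ℝ → ℝ) (z : ℝ) : ℝ := ∫ t in Set.Iic z, f t

lemma auxF_mem_Ioo (hmeas : Measurable f) (hpos : ∀ z, 0 < f z)
    (hnorm : ∫⁻ z, ENNReal.ofReal (f z) = 1) (z : ℝ) :
    auxF f z ∈ Set.Ioo (0 : ℝ) 1 := by
  have hint := aux_integrable hmeas (fun z => (hpos z).le) hnorm
  constructor
  · rw [auxF, setIntegral_pos_iff_support_of_nonneg_ae
      (Eventually.of_forall fun t => (hpos t).le) hint.restrict]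
    have : Function.support f = Set.univ := by
      ext t; simp [Function.support, (hpos t).ne']
    rw [this, Set.univ_inter]
    simp [Real.volume_Iic]
  · have h1 := aux_lintegral_Iic_lt_one hmeas hpos hnorm z
    have h2 := aux_ofReal_setIntegral hmeas (fun z => (hpos z).le) hnorm (Set.Iic z)
    rw [← h2] at h1
    exact_mod_cast (ENNReal.ofReal_lt_one).mp h1

lemma auxF_strictMono (hmeas : Measurable f) (hpos : ∀ z, 0 < f z)
    (hnorm : ∫⁻ z, ENNReal.ofReal (f z) = 1) : StrictMono (auxF f) := by
  have hint := aux_integrable hmeas (fun z => (hpos z).le) hnorm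
  intro a b hab
  have hsplit : auxF f b - auxF f a = ∫ t in Set.Ioc a b, f t := by
    rw [auxF, auxF, ← Set.Iic_union_Ioc_eq_Iic hab.le,
      setIntegral_union (Set.Iic_disjoint_Ioc le_rfl) measurableSet_Ioc
        hint.restrict hint.restrict]
    ring
  have hpos2 : 0 < ∫ t in Set.Ioc a b, f t := by
    rw [setIntegral_pos_iff_support_of_nonneg_ae
      (Eventually.of_forall fun t => (hpos t).le) hint.restrict]
    have : Function.support f = Set.univ := by
      ext t; simp [Function.support, (hpos t).ne']
    rw [this, Set.univ_inter]
    simp [Real.volume_Ioc, hab]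
  linarith [hsplit]

lemma auxF_continuous (hmeas : Measurable f) (hpos : ∀ z, 0 < f z)
    (hnorm : ∫⁻ z, ENNReal.ofReal (f z) = 1) : Continuous (auxF f) := by
  have hint := aux_integrable hmeas (fun z => (hpos z).le) hnorm
  have key : ∀ z, auxF f z = (∫ t in (0:ℝ)..z, f t) + auxF f 0 := by
    intro z
    have := intervalIntegral.integral_Iic_sub_Iic hint.restrict hint.restrict (a := (0:ℝ)) (b := z)
    rw [auxF, auxF]; linarith
  have heq : auxF f = fun z => (∫ t in (0:ℝ)..z, f t) + auxF f 0 := funext key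
  rw [heq]
  exact (intervalIntegral.continuous_primitive
    (fun a b => hint.intervalIntegrable) 0).add continuous_const

end Density2
section Density3
variable {f : ℝ → ℝ}

lemma auxF_surjOn (hmeas : Measurable f) (hpos : ∀ z, 0 < f z)
    (hnorm : ∫⁻ z, ENNReal.ofReal (f z) = 1) {u : ℝ} (hu : u ∈ Set.Ioo (0:ℝ) 1) :
    ∃ z, auxF f z = u := by
  set μf := volume.withDensity fun z => ENNReal.ofReal (f z) with hμf
  have hap : ∀ z, μf (Set.Iic z) = ENNReal.ofReal (auxF f z) := fun z => by
    rw [hμf, withDensity_apply _ measurableSet_Iic,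
      ← aux_ofReal_setIntegral hmeas (fun z => (hpos z).le) hnorm]
    rfl
  have hne : ∀ z, μf (Set.Iic z) ≠ ⊤ := fun z => by rw [hap]; exact ENNReal.ofReal_ne_top
  -- small values
  have hlow : Tendsto (fun k : ℕ => μf (Set.Iic (-(k:ℝ)))) atTop
      (𝓝 (μf (⋂ k : ℕ, Set.Iic (-(k:ℝ))))) := by
    refine tendsto_measure_iInter_atTop (fun k => measurableSet_Iic.nullMeasurableSet)
      (fun i j hij => Set.Iic_subset_Iic.mpr (by exact_mod_cast neg_le_neg (by exact_mod_cast hij)))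
      ⟨0, hne _⟩
  have hIempty : (⋂ k : ℕ, Set.Iic (-(k:ℝ))) = ∅ := by
    ext t
    simp only [Set.mem_iInter, Set.mem_Iic, Set.mem_empty_iff_false, iff_false, not_forall, not_le]
    obtain ⟨k, hk⟩ := exists_nat_gt (-t)
    exact ⟨k, by linarith⟩
  rw [hIempty, measure_empty] at hlow
  have h1 : ∃ k : ℕ, auxF f (-(k:ℝ)) < u := by
    have hev := hlow.eventually_lt_const (ENNReal.ofReal_pos.mpr hu.1)
    obtain ⟨k, hk⟩ := hev.exists
    refine ⟨k, ?_⟩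
    rw [hap] at hk
    by_contra hle
    exact absurd hk (not_lt.mpr (ENNReal.ofReal_le_ofReal (not_lt.mp hle)))
  -- large values
  have hup : Tendsto (fun k : ℕ => μf (Set.Iic (k:ℝ))) atTop
      (𝓝 (μf (⋃ k : ℕ, Set.Iic (k:ℝ)))) := by
    refine tendsto_measure_iUnion_atTop (fun i j hij => Set.Iic_subset_Iic.mpr (by exact_mod_cast hij))
  have hIuniv : (⋃ k : ℕ, Set.Iic (k:ℝ)) = Set.univ := by
    ext t
    simp only [Set.mem_iUnion, Set.mem_Iic, Set.mem_univ, iff_true]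
    obtain ⟨k, hk⟩ := exists_nat_gt t
    exact ⟨k, hk.le⟩
  have hμuniv : μf Set.univ = 1 := by
    rw [hμf, withDensity_apply _ MeasurableSet.univ, setLIntegral_univ, hnorm]
  rw [hIuniv, hμuniv] at hup
  have h2 : ∃ k : ℕ, u < auxF f (k:ℝ) := by
    have hev := hup.eventually_const_lt (ENNReal.ofReal_lt_one.mpr hu.2)
    obtain ⟨k, hk⟩ := hev.exists
    refine ⟨k, ?_⟩
    rw [hap] at hk
    by_contra hle
    exact absurd hk (not_lt.mpr (ENNReal.ofReal_le_ofReal (not_lt.mp hle)))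
  obtain ⟨k₁, hk₁⟩ := h1
  obtain ⟨k₂, hk₂⟩ := h2
  have hord : (-(k₁:ℝ)) ≤ (k₂:ℝ) := by
    by_contra hc
    push_neg at hc
    exact absurd ((auxF_strictMono hmeas hpos hnorm) hc) (by linarith)
  obtain ⟨z, _, hz⟩ := intermediate_value_Icc hord
    ((auxF_continuous hmeas hpos hnorm).continuousOn) ⟨hk₁.le, hk₂.le⟩
  exact ⟨z, hz⟩

lemma aux_map_cdf (hmeas : Measurable f) (hpos : ∀ z, 0 < f z)
    (hnorm : ∫⁻ z, ENNReal.ofReal (f z) = 1) :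
    (volume.withDensity fun z => ENNReal.ofReal (f z)).map (auxF f)
      = volume.restrict (Set.Ioo 0 1) := by
  set μf := volume.withDensity fun z => ENNReal.ofReal (f z) with hμf
  have hμuniv : μf Set.univ = 1 := by
    rw [hμf, withDensity_apply _ MeasurableSet.univ, setLIntegral_univ, hnorm]
  have hfin : IsFiniteMeasure (μf.map (auxF f)) := by
    constructor
    rw [Measure.map_apply (auxF_continuous hmeas hpos hnorm).measurable MeasurableSet.univ,
      Set.preimage_univ, hμuniv]
    exact ENNReal.one_lt_top
  haveI := hfin
  refine Measure.ext_of_Iic (μf.map (auxF f)) _ (fun a => ?_)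
  rw [Measure.map_apply (auxF_continuous hmeas hpos hnorm).measurable measurableSet_Iic,
    Measure.restrict_apply measurableSet_Iic]
  rcases le_or_gt a 0 with ha | ha
  · have h1 : auxF f ⁻¹' Set.Iic a = ∅ := by
      ext z
      simp only [Set.mem_preimage, Set.mem_Iic, Set.mem_empty_iff_false, iff_false, not_le]
      exact lt_of_le_of_lt ha (auxF_mem_Ioo hmeas hpos hnorm z).1
    have h2 : Set.Iic a ∩ Set.Ioo (0:ℝ) 1 = ∅ := by
      ext x
      simp only [Set.mem_inter_iff, Set.mem_Iic, Set.mem_Ioo, Set.mem_empty_iff_false, iff_false]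
      rintro ⟨hx1, hx2, _⟩; linarith
    rw [h1, h2]; simp
  · rcases lt_or_ge a 1 with ha1 | ha1
    · obtain ⟨z₀, hz₀⟩ := auxF_surjOn hmeas hpos hnorm ⟨ha, ha1⟩
      have h1 : auxF f ⁻¹' Set.Iic a = Set.Iic z₀ := by
        ext z
        simp only [Set.mem_preimage, Set.mem_Iic]
        rw [← hz₀]
        exact (auxF_strictMono hmeas hpos hnorm).le_iff_le
      have h2 : Set.Iic a ∩ Set.Ioo (0:ℝ) 1 = Set.Ioc 0 a := by
        ext x
        simp only [Set.mem_inter_iff, Set.mem_Iic, Set.mem_Ioo, Set.mem_Ioc]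
        constructor
        · rintro ⟨hx1, hx2, _⟩; exact ⟨hx2, hx1⟩
        · rintro ⟨hx1, hx2⟩; exact ⟨hx2, hx1, lt_of_le_of_lt hx2 ha1⟩
      rw [h1, h2, hμf, withDensity_apply _ measurableSet_Iic,
        ← aux_ofReal_setIntegral hmeas (fun z => (hpos z).le) hnorm, Real.volume_Ioc]
      show ENNReal.ofReal (auxF f z₀) = _
      rw [hz₀]; norm_num
    · have h1 : auxF f ⁻¹' Set.Iic a = Set.univ := by
        ext z
        simp only [Set.mem_preimage, Set.mem_Iic, Set.mem_univ, iff_true]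
        exact le_trans (auxF_mem_Ioo hmeas hpos hnorm z).2.le ha1
      have h2 : Set.Iic a ∩ Set.Ioo (0:ℝ) 1 = Set.Ioo 0 1 := by
        refine Set.inter_eq_self_of_subset_right (fun x hx => ?_)
        exact le_trans hx.2.le ha1
      rw [h1, h2, hμuniv, Real.volume_Ioo]
      norm_num

end Density3

section T
variable {f : ℝ → ℝ}


lemma aux_lintegral_comp_cdf (hmeas : Measurable f) (hpos : ∀ z, 0 < f z)
    (hnorm : ∫⁻ z, ENNReal.ofReal (f z) = 1) {g : ℝ → ℝ} (hg : Measurable g)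
    (hgpos : ∀ v ∈ Set.Icc (0:ℝ) 1, 0 < g v) (hgint : ∫ v in Set.Icc (0:ℝ) 1, g v = 1) :
    ∫⁻ y, ENNReal.ofReal (g (auxF f y))
        ∂(volume.withDensity fun z => ENNReal.ofReal (f z)) = 1 := by
  have hgi : IntegrableOn g (Set.Icc (0:ℝ) 1) := by
    by_contra hcon
    rw [MeasureTheory.integral_undef hcon] at hgint
    norm_num at hgint
  rw [← lintegral_map hg.ennreal_ofReal (auxF_continuous hmeas hpos hnorm).measurable,
    aux_map_cdf hmeas hpos hnorm,
    ← ofReal_integral_eq_lintegral_ofReal (hgi.mono_set Set.Ioo_subset_Icc_self)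
      ((ae_restrict_iff' measurableSet_Ioo).2 (ae_of_all _ fun v hv =>
        (hgpos v (Set.Ioo_subset_Icc_self hv)).le)),
    ← integral_Icc_eq_integral_Ioo, hgint]
  norm_num

end T

section HMW
variable (f0 : ℝ → ℝ) (c : ℕ → ℝ → ℝ → ℝ)

lemma hmw_succ_eq (n : ℕ) (x : Fin n → ℝ) (y z : ℝ) :
    hmwDensity f0 c (n+1) (Fin.snoc x y) z
      = c (n+1) (auxF (hmwDensity f0 c n x) z) (auxF (hmwDensity f0 c n x) y)
          * hmwDensity f0 c n x z := by
  simp [hmwDensity, auxF, Fin.init_snoc, Fin.snoc_last]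

lemma hmw_norm (κ : ∀ n, Kernel (Fin n → ℝ) ℝ) [∀ n, IsMarkovKernel (κ n)]
    (hκ : ∀ n (x : Fin n → ℝ),
      κ n x = volume.withDensity (fun z => ENNReal.ofReal (hmwDensity f0 c n x z)))
    (n : ℕ) (x : Fin n → ℝ) :
    ∫⁻ z, ENNReal.ofReal (hmwDensity f0 c n x z) = 1 := by
  rw [← setLIntegral_univ, ← withDensity_apply _ MeasurableSet.univ, ← hκ]
  exact measure_univ

lemma hmw_meas_pos
    (hf0meas : Measurable f0) (hf0pos : ∀ z, 0 < f0 z)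
    (hcmeas : ∀ n, 1 ≤ n → Measurable (Function.uncurry (c n)))
    (hcpos : ∀ n, 1 ≤ n → ∀ u ∈ Set.Icc (0:ℝ) 1, ∀ v ∈ Set.Icc (0:ℝ) 1, 0 < c n u v)
    (hnorm : ∀ n (x : Fin n → ℝ), ∫⁻ z, ENNReal.ofReal (hmwDensity f0 c n x z) = 1) :
    ∀ n (x : Fin n → ℝ),
      Measurable (hmwDensity f0 c n x) ∧ ∀ z, 0 < hmwDensity f0 c n x z := by
  intro n
  induction n with
  | zero => intro x; exact ⟨hf0meas, hf0pos⟩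
  | succ n ih =>
      intro x
      obtain ⟨hm, hp⟩ := ih (Fin.init x)
      have hn := hnorm n (Fin.init x)
      have hFc := auxF_continuous hm hp hn
      have hFm := auxF_mem_Ioo hm hp hn
      have hkey : ∀ z, hmwDensity f0 c (n+1) x z
          = c (n+1) (auxF (hmwDensity f0 c n (Fin.init x)) z)
              (auxF (hmwDensity f0 c n (Fin.init x)) (x (Fin.last n)))
              * hmwDensity f0 c n (Fin.init x) z := fun z => by
        simp [hmwDensity, auxF]
      constructor
      · have : Measurable fun z =>
            c (n+1) (auxF (hmwDensity f0 c n (Fin.init x)) z)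
              (auxF (hmwDensity f0 c n (Fin.init x)) (x (Fin.last n)))
              * hmwDensity f0 c n (Fin.init x) z :=
          ((hcmeas (n+1) (Nat.succ_le_succ (Nat.zero_le n))).comp
            (hFc.measurable.prodMk measurable_const)).mul hm
        have hfx : hmwDensity f0 c (n+1) x = fun z =>
            c (n+1) (auxF (hmwDensity f0 c n (Fin.init x)) z)
              (auxF (hmwDensity f0 c n (Fin.init x)) (x (Fin.last n)))
              * hmwDensity f0 c n (Fin.init x) z := funext hkey
        rw [hfx]; exact this
      · intro z
        rw [hkey z]
        exact mul_pos (hcpos (n+1) (Nat.succ_le_succ (Nat.zero_le n)) _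
          (Set.Ioo_subset_Icc_self (hFm z)) _
          (Set.Ioo_subset_Icc_self (hFm (x (Fin.last n))))) (hp z)

end HMW
section Step
variable (f0 : ℝ → ℝ) (c : ℕ → ℝ → ℝ → ℝ)

lemma hmw_step
    (hf0meas : Measurable f0) (hf0pos : ∀ z, 0 < f0 z)
    (hcmeas : ∀ n, 1 ≤ n → Measurable (Function.uncurry (c n)))
    (hcpos : ∀ n, 1 ≤ n → ∀ u ∈ Set.Icc (0:ℝ) 1, ∀ v ∈ Set.Icc (0:ℝ) 1, 0 < c n u v)
    (hcmarg₂ : ∀ n, 1 ≤ n → ∀ u ∈ Set.Icc (0:ℝ) 1, ∫ v in Set.Icc (0:ℝ) 1, c n u v = 1)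
    (κ : ∀ n, Kernel (Fin n → ℝ) ℝ) [∀ n, IsMarkovKernel (κ n)]
    (hκ : ∀ n (x : Fin n → ℝ),
      κ n x = volume.withDensity (fun z => ENNReal.ofReal (hmwDensity f0 c n x z)))
    (n : ℕ) (x : Fin n → ℝ) {A : Set ℝ} (hA : MeasurableSet A) :
    ∫⁻ y, κ (n+1) (Fin.snoc x y) A ∂(κ n x) = κ n x A := by
  have hnorm := hmw_norm f0 c κ hκ
  obtain ⟨hm, hp⟩ := hmw_meas_pos f0 c hf0meas hf0pos hcmeas hcpos hnorm n x
  set f := hmwDensity f0 c n x with hf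
  set F := auxF f with hF
  have hone : 1 ≤ n + 1 := Nat.succ_le_succ (Nat.zero_le n)
  have hFc : Continuous F := auxF_continuous hm hp (hnorm n x)
  have hFm : ∀ z, F z ∈ Set.Icc (0:ℝ) 1 :=
    fun z => Set.Ioo_subset_Icc_self (auxF_mem_Ioo hm hp (hnorm n x) z)
  have key : ∀ y, κ (n+1) (Fin.snoc x y) A
      = ∫⁻ z in A, ENNReal.ofReal (c (n+1) (F z) (F y)) * ENNReal.ofReal (f z) := by
    intro y
    rw [hκ (n+1) (Fin.snoc x y), withDensity_apply _ hA]
    refine lintegral_congr fun z => ?_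
    rw [hmw_succ_eq, ← hf, ← hF,
      ENNReal.ofReal_mul (hcpos (n+1) hone _ (hFm z) _ (hFm y)).le]
  rw [lintegral_congr key]
  have hswap : ∫⁻ y, (∫⁻ z in A,
        ENNReal.ofReal (c (n+1) (F z) (F y)) * ENNReal.ofReal (f z)) ∂(κ n x)
      = ∫⁻ z in A, (∫⁻ y,
        ENNReal.ofReal (c (n+1) (F z) (F y)) * ENNReal.ofReal (f z) ∂(κ n x)) := by
    refine lintegral_lintegral_swap ?_
    refine (Measurable.aemeasurable ?_)
    refine Measurable.mul (f := fun p : ℝ × ℝ => ENNReal.ofReal (c (n+1) (F p.2) (F p.1))) (g := fun p : ℝ × ℝ => ENNReal.ofReal (f p.2)) ?_ ?_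
    · exact ((hcmeas (n+1) hone).comp
        ((hFc.measurable.comp measurable_snd).prodMk
          (hFc.measurable.comp measurable_fst))).ennreal_ofReal
    · exact (hm.comp measurable_snd).ennreal_ofReal
  rw [hswap]
  have hinner : ∀ z, (∫⁻ y,
      ENNReal.ofReal (c (n+1) (F z) (F y)) * ENNReal.ofReal (f z) ∂(κ n x))
      = ENNReal.ofReal (f z) := by
    intro z
    have hmc : Measurable fun y => ENNReal.ofReal (c (n + 1) (F z) (F y)) :=
      ((hcmeas (n+1) hone).comp
        (measurable_const.prodMk hFc.measurable)).ennreal_ofReal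
    rw [lintegral_mul_const _ hmc]
    have : ∫⁻ y, ENNReal.ofReal (c (n+1) (F z) (F y)) ∂(κ n x) = 1 := by
      rw [hκ n x]
      exact aux_lintegral_comp_cdf hm hp (hnorm n x)
        ((hcmeas (n+1) hone).comp (measurable_const.prodMk measurable_id))
        (fun v hv => hcpos (n+1) hone _ (hFm z) v hv)
        (hcmarg₂ (n+1) hone _ (hFm z))
    rw [this, one_mul]
  rw [lintegral_congr hinner, ← withDensity_apply _ hA, ← hκ n x]

end Step


variable {S : Type*} [MeasurableSpace S]

lemma measurable_snoc_pair (m : ℕ) :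
    Measurable (fun p : (Fin m → S) × S => (Fin.snoc p.1 p.2 : Fin (m+1) → S)) := by
  refine measurable_pi_lambda _ (fun i => ?_)
  refine Fin.lastCases ?_ (fun j => ?_) i
  · have : (fun p : (Fin m → S) × S => (Fin.snoc p.1 p.2 : Fin (m+1) → S) (Fin.last m)) = fun p => p.2 := by
      funext p; simp
    rw [this]; exact measurable_snd
  · have : (fun p : (Fin m → S) × S => (Fin.snoc p.1 p.2 : Fin (m+1) → S) (Fin.castSucc j)) = fun p => p.1 j := by
      funext p; simp
    rw [this]; exact (measurable_pi_apply j).comp measurable_fst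

lemma measurable_snoc (m : ℕ) (x : Fin m → S) :
    Measurable (fun y : S => (Fin.snoc x y : Fin (m+1) → S)) :=
  (measurable_snoc_pair m).comp (measurable_const.prodMk measurable_id)

lemma measurable_map_snoc (m : ℕ) (κ : Kernel (Fin m → S) S) [IsSFiniteKernel κ] :
    Measurable (fun x : Fin m → S => ((κ x).map (Fin.snoc x) : Measure (Fin (m+1) → S))) := by
  refine Measure.measurable_of_measurable_coe _ (fun s hs => ?_)
  have heq : (fun x : Fin m → S => ((κ x).map (Fin.snoc x)) s)
      = fun x => κ x (Prod.mk x ⁻¹' ((fun p : (Fin m → S) × S => (Fin.snoc p.1 p.2 : Fin (m+1) → S)) ⁻¹' s)) := by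
    funext x
    rw [Measure.map_apply (measurable_snoc m x) hs]
    rfl
  rw [heq]
  exact Kernel.measurable_kernel_prodMk_left ((measurable_snoc_pair m) hs)

lemma stratFDD_succ_apply (κ : ∀ n, Kernel (Fin n → S) S) [∀ n, IsMarkovKernel (κ n)] (m : ℕ)
    {C : Set (Fin (m+1) → S)} (hC : MeasurableSet C) :
    stratFDD κ (m+1) C = ∫⁻ x, κ m x {y | Fin.snoc x y ∈ C} ∂(stratFDD κ m) := by
  rw [stratFDD, Measure.bind_apply hC (measurable_map_snoc m (κ m)).aemeasurable]
  refine lintegral_congr fun x => ?_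
  rw [Measure.map_apply (measurable_snoc m x) hC]
  rfl

instance stratFDD_prob (κ : ∀ n, Kernel (Fin n → S) S) [∀ n, IsMarkovKernel (κ n)] (n : ℕ) :
    IsProbabilityMeasure (stratFDD κ n) := by
  induction n with
  | zero => rw [stratFDD]; infer_instance
  | succ n ih =>
      constructor
      rw [stratFDD_succ_apply κ n MeasurableSet.univ]
      have : ∀ x : Fin n → S, κ n x {y | Fin.snoc x y ∈ (Set.univ : Set (Fin (n+1) → S))} = 1 := by
        intro x
        have : {y : S | Fin.snoc x y ∈ (Set.univ : Set (Fin (n+1) → S))} = Set.univ := by simp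
        rw [this]; exact measure_univ
      rw [lintegral_congr this, lintegral_one, measure_univ]

variable {S' : Type*} [MeasurableSpace S']

lemma measurable_castLE_proj {n m : ℕ} (h : n ≤ m) :
    Measurable (fun (x : Fin m → S') (i : Fin n) => x (Fin.castLE h i)) :=
  measurable_pi_lambda _ (fun i => measurable_pi_apply _)

lemma stratFDD_proj (κ : ∀ n, Kernel (Fin n → S') S') [∀ n, IsMarkovKernel (κ n)]
    (hstep : ∀ m (x : Fin m → S') (A : Set S'), MeasurableSet A →
      ∫⁻ y, κ (m+1) (Fin.snoc x y) A ∂(κ m x) = κ m x A)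
    (n : ℕ) {B : Set (Fin n → S')} (hB : MeasurableSet B) {A : Set S'} (hA : MeasurableSet A) :
    ∀ m (h : n ≤ m),
      ∫⁻ x in (fun (x : Fin m → S') (i : Fin n) => x (Fin.castLE h i)) ⁻¹' B,
          κ m x A ∂(stratFDD κ m)
        = ∫⁻ x in B, κ n x A ∂(stratFDD κ n) := by
  refine Nat.le_induction ?_ ?_
  · have : (fun (x : Fin n → S') (i : Fin n) => x (Fin.castLE le_rfl i)) ⁻¹' B = B := by
      have : (fun (x : Fin n → S') (i : Fin n) => x (Fin.castLE le_rfl i)) = id := by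
        funext x i; rfl
      rw [this, Set.preimage_id]
    rw [this]
  · intro m h ih
    have h' : n ≤ m + 1 := Nat.le_succ_of_le h
    set R' : (Fin m → S') → Fin n → S' := fun x i => x (Fin.castLE h i) with hR'
    have hkeyset : ∀ (x : Fin m → S') (y : S'),
        ((fun (x : Fin (m+1) → S') (i : Fin n) => x (Fin.castLE h' i)) (Fin.snoc x y)) = R' x := by
      intro x y
      funext i
      show (Fin.snoc x y : Fin (m+1) → S') (Fin.castLE h' i) = x (Fin.castLE h i)
      have : Fin.castLE h' i = Fin.castSucc (Fin.castLE h i) := rfl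
      rw [this, Fin.snoc_castSucc]
    have hRB : MeasurableSet ((fun (x : Fin (m+1) → S') (i : Fin n) => x (Fin.castLE h' i)) ⁻¹' B) :=
      measurable_castLE_proj h' hB
    have hR'B : MeasurableSet (R' ⁻¹' B) := measurable_castLE_proj h hB
    have hg : Measurable (((fun (x : Fin (m+1) → S') (i : Fin n) => x (Fin.castLE h' i)) ⁻¹' B).indicator
        (fun x => κ (m+1) x A)) :=
      (Kernel.measurable_coe (κ (m+1)) hA).indicator hRB
    rw [← lintegral_indicator hRB, show stratFDD κ (m+1)
        = (stratFDD κ m).bind (fun x => ((κ m) x).map (Fin.snoc x)) from rfl,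
      Measure.lintegral_bind (measurable_map_snoc m (κ m)).aemeasurable hg.aemeasurable]
    have hpt : ∀ x : Fin m → S',
        (∫⁻ ω, ((fun (x : Fin (m+1) → S') (i : Fin n) => x (Fin.castLE h' i)) ⁻¹' B).indicator
            (fun x => κ (m+1) x A) ω ∂((κ m x).map (Fin.snoc x)))
          = (R' ⁻¹' B).indicator (fun x => κ m x A) x := by
      intro x
      rw [lintegral_map hg (measurable_snoc m x)]
      by_cases hx : x ∈ R' ⁻¹' B
      · have heq : ∀ y : S', ((fun (x : Fin (m+1) → S') (i : Fin n) => x (Fin.castLE h' i)) ⁻¹' B).indicator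
            (fun x => κ (m+1) x A) (Fin.snoc x y) = κ (m+1) (Fin.snoc x y) A := by
          intro y
          rw [Set.indicator_of_mem]
          show ((fun (x : Fin (m+1) → S') (i : Fin n) => x (Fin.castLE h' i)) (Fin.snoc x y)) ∈ B
          rw [hkeyset x y]; exact hx
        rw [lintegral_congr heq, hstep m x A hA, Set.indicator_of_mem hx]
      · have heq : ∀ y : S', ((fun (x : Fin (m+1) → S') (i : Fin n) => x (Fin.castLE h' i)) ⁻¹' B).indicator
            (fun x => κ (m+1) x A) (Fin.snoc x y) = 0 := by
          intro y
          rw [Set.indicator_of_notMem]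
          show ¬ ((fun (x : Fin (m+1) → S') (i : Fin n) => x (Fin.castLE h' i)) (Fin.snoc x y)) ∈ B
          rw [hkeyset x y]; exact hx
        rw [lintegral_congr heq, lintegral_zero, Set.indicator_of_notMem hx]
    rw [lintegral_congr hpt, lintegral_indicator hR'B]
    exact ih

variable {T : Type*} [MeasurableSpace T]

lemma law_inter (κ : ∀ n, Kernel (Fin n → T) T) [∀ n, IsMarkovKernel (κ n)]
    (hstep : ∀ m (x : Fin m → T) (A : Set T), MeasurableSet A →
      ∫⁻ y, κ (m+1) (Fin.snoc x y) A ∂(κ m x) = κ m x A)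
    (P : Measure (ℕ → T))
    (hP : ∀ n, P.map (fun ω (i : Fin n) => ω i) = stratFDD κ n)
    (n m : ℕ) (h : n ≤ m)
    {B : Set (Fin n → T)} (hB : MeasurableSet B) {A : Set T} (hA : MeasurableSet A) :
    P ((fun ω (i : Fin n) => ω i) ⁻¹' B ∩ (fun ω => ω m) ⁻¹' A)
      = ∫⁻ x in B, κ n x A ∂(stratFDD κ n) := by
  have h' : n ≤ m + 1 := Nat.le_succ_of_le h
  set C : Set (Fin (m+1) → T) :=
    ((fun (x : Fin (m+1) → T) (i : Fin n) => x (Fin.castLE h' i)) ⁻¹' B)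
      ∩ ((fun x : Fin (m+1) → T => x (Fin.last m)) ⁻¹' A) with hC
  have hCmeas : MeasurableSet C :=
    (measurable_castLE_proj h' hB).inter ((measurable_pi_apply (Fin.last m)) hA)
  have hpre : (fun ω : ℕ → T => fun i : Fin (m+1) => ω i) ⁻¹' C
      = (fun ω (i : Fin n) => ω i) ⁻¹' B ∩ (fun ω : ℕ → T => ω m) ⁻¹' A := by
    ext ω
    simp only [Set.mem_preimage, hC, Set.mem_inter_iff]
    constructor
    · rintro ⟨h1, h2⟩
      exact ⟨h1, h2⟩
    · rintro ⟨h1, h2⟩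
      exact ⟨h1, h2⟩
  have hπmeas : Measurable (fun ω : ℕ → T => fun i : Fin (m+1) => ω i) :=
    measurable_pi_lambda _ (fun i => measurable_pi_apply _)
  rw [← hpre, ← Measure.map_apply hπmeas hCmeas, hP (m+1), stratFDD_succ_apply κ m hCmeas]
  have hpt : ∀ x : Fin m → T, κ m x {y | Fin.snoc x y ∈ C}
      = ((fun (x : Fin m → T) (i : Fin n) => x (Fin.castLE h i)) ⁻¹' B).indicator
          (fun x => κ m x A) x := by
    intro x
    have h1 : ∀ y : T, (fun i : Fin n => (Fin.snoc x y : Fin (m+1) → T) (Fin.castLE h' i))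
        = fun i => x (Fin.castLE h i) := by
      intro y
      funext i
      have : Fin.castLE h' i = Fin.castSucc (Fin.castLE h i) := rfl
      rw [this, Fin.snoc_castSucc]
    have h2 : ∀ y : T, (Fin.snoc x y : Fin (m+1) → T) (Fin.last m) = y := by
      intro y; simp
    by_cases hx : (fun i : Fin n => x (Fin.castLE h i)) ∈ B
    · have hset : {y | Fin.snoc x y ∈ C} = A := by
        ext y
        simp only [hC, Set.mem_setOf_eq, Set.mem_inter_iff, Set.mem_preimage, h1 y, h2 y]
        exact ⟨fun hy => hy.2, fun hy => ⟨hx, hy⟩⟩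
      rw [hset]
      exact (Set.indicator_of_mem (show x ∈ (fun (x : Fin m → T) (i : Fin n) => x (Fin.castLE h i)) ⁻¹' B from hx) (fun x => κ m x A)).symm
    · have hset : {y | Fin.snoc x y ∈ C} = (∅ : Set T) := by
        ext y
        simp only [hC, Set.mem_setOf_eq, Set.mem_inter_iff, Set.mem_preimage, h1 y, h2 y,
          Set.mem_empty_iff_false, iff_false]
        exact fun hy => hx hy.1
      rw [hset, measure_empty]
      exact (Set.indicator_of_notMem (show x ∉ (fun (x : Fin m → T) (i : Fin n) => x (Fin.castLE h i)) ⁻¹' B from hx) (fun x => κ m x A)).symm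
  rw [lintegral_congr hpt, lintegral_indicator (measurable_castLE_proj h hB),
    stratFDD_proj κ hstep n hB hA m h]

variable {U : Type*} [MeasurableSpace U]

lemma cid_condexp (κ : ∀ n, Kernel (Fin n → U) U) [∀ n, IsMarkovKernel (κ n)]
    (hstep : ∀ m (x : Fin m → U) (A : Set U), MeasurableSet A →
      ∫⁻ y, κ (m+1) (Fin.snoc x y) A ∂(κ m x) = κ m x A)
    (P : Measure (ℕ → U)) [IsProbabilityMeasure P]
    (hP : ∀ n, P.map (fun ω (i : Fin n) => ω i) = stratFDD κ n)
    (n m : ℕ) (h : n ≤ m) {A : Set U} (hA : MeasurableSet A) :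
    (fun ω : ℕ → U => (κ n (fun i : Fin n => ω i) A).toReal)
      =ᵐ[P] P[Set.indicator ((fun ω : ℕ → U => ω m) ⁻¹' A) (fun _ => (1:ℝ)) |
        MeasurableSpace.comap (fun ω (i : Fin n) => ω i) inferInstance] := by
  set π : (ℕ → U) → Fin n → U := fun ω i => ω i with hπdef
  have hπ : Measurable π := measurable_pi_lambda _ (fun i => measurable_pi_apply _)
  have hm0 : MeasurableSpace.comap π inferInstance ≤ (inferInstance : MeasurableSpace (ℕ → U)) :=
    hπ.comap_le
  have hπcomap : Measurable[MeasurableSpace.comap π inferInstance] π := fun s hs => ⟨s, hs, rfl⟩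
  have hgmeas : Measurable (fun ω : ℕ → U => (κ n (π ω) A).toReal) :=
    ((Kernel.measurable_coe (κ n) hA).ennreal_toReal).comp hπ
  have hgmeas' : Measurable[MeasurableSpace.comap π inferInstance]
      (fun ω : ℕ → U => (κ n (π ω) A).toReal) :=
    ((Kernel.measurable_coe (κ n) hA).ennreal_toReal).comp hπcomap
  have hevm : Measurable (fun ω : ℕ → U => ω m) := measurable_pi_apply m
  refine ae_eq_condExp_of_forall_setIntegral_eq hm0 ?_ ?_ ?_ ?_
  · exact (integrable_const (1:ℝ)).indicator (hevm hA)
  · intro s _ _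
    refine Integrable.integrableOn ⟨hgmeas.aestronglyMeasurable, ?_⟩
    refine HasFiniteIntegral.of_bounded (C := 1) (ae_of_all _ fun ω => ?_)
    rw [Real.norm_eq_abs, abs_of_nonneg ENNReal.toReal_nonneg]
    exact ENNReal.toReal_le_of_le_ofReal zero_le_one (by simpa using prob_le_one)
  · rintro s ⟨B, hB, rfl⟩ -
    have h1 : ∫ ω in π ⁻¹' B, Set.indicator ((fun ω : ℕ → U => ω m) ⁻¹' A) (fun _ => (1:ℝ)) ω ∂P
        = (P (π ⁻¹' B ∩ (fun ω : ℕ → U => ω m) ⁻¹' A)).toReal := by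
      rw [setIntegral_indicator (hevm hA), setIntegral_const, smul_eq_mul, mul_one, Measure.real]
    have h2 : ∫ ω in π ⁻¹' B, (κ n (π ω) A).toReal ∂P
        = ∫ x in B, (κ n x A).toReal ∂(stratFDD κ n) := by
      rw [← hP n, setIntegral_map hB
        ((Kernel.measurable_coe (κ n) hA).ennreal_toReal).aestronglyMeasurable hπ.aemeasurable]
    have h3 : ∫ x in B, (κ n x A).toReal ∂(stratFDD κ n)
        = (∫⁻ x in B, κ n x A ∂(stratFDD κ n)).toReal := by
      refine integral_toReal ((Kernel.measurable_coe (κ n) hA).aemeasurable) ?_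
      exact ae_of_all _ fun x => lt_of_le_of_lt prob_le_one ENNReal.one_lt_top
    rw [h1, h2, h3, law_inter κ hstep P hP n m h hB hA]
  · exact StronglyMeasurable.aestronglyMeasurable hgmeas'.stronglyMeasurable


end AuxAll

lemma law_eval {U : Type*} [MeasurableSpace U]
    (κ : ∀ n, Kernel (Fin n → U) U) [∀ n, IsMarkovKernel (κ n)]
    (hstep : ∀ m (x : Fin m → U) (A : Set U), MeasurableSet A →
      ∫⁻ y, κ (m+1) (Fin.snoc x y) A ∂(κ m x) = κ m x A)
    (P : Measure (ℕ → U))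
    (hP : ∀ n, P.map (fun ω (i : Fin n) => ω i) = stratFDD κ n) :
    P.map (fun ω : ℕ → U => ω 1) = P.map (fun ω : ℕ → U => ω 0) := by
  refine Measure.ext fun A hA => ?_
  have key : ∀ m : ℕ, P ((fun ω : ℕ → U => ω m) ⁻¹' A)
      = ∫⁻ x in (Set.univ : Set (Fin 0 → U)), κ 0 x A ∂(stratFDD κ 0) := by
    intro m
    have := law_inter κ hstep P hP 0 m (Nat.zero_le m) MeasurableSet.univ hA
    rwa [Set.preimage_univ, Set.univ_inter] at this
  rw [Measure.map_apply (measurable_pi_apply 1) hA,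
    Measure.map_apply (measurable_pi_apply 0) hA, key 1, key 0]

/-- **Theorem.** Let `σ` be the HMW strategy on `ℝ`, i.e. the strategy whose predictive
`σ_n(x)` has Lebesgue density `f_n(· | x)` given by the copula recursion. Then the
coordinate process is c.i.d. under `P_σ`. -/
theorem hmw_strategy_cid (f0 : ℝ → ℝ) (c : ℕ → ℝ → ℝ → ℝ)
    (hf0meas : Measurable f0) (hf0pos : ∀ z, 0 < f0 z)
    (hf0int : ∫ z, f0 z = 1)
    (hcmeas : ∀ n, 1 ≤ n → Measurable (Function.uncurry (c n)))
    (hcpos : ∀ n, 1 ≤ n → ∀ u ∈ Set.Icc (0 : ℝ) 1, ∀ v ∈ Set.Icc (0 : ℝ) 1, 0 < c n u v)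
    (hcmarg₁ : ∀ n, 1 ≤ n → ∀ v ∈ Set.Icc (0 : ℝ) 1, ∫ u in Set.Icc (0 : ℝ) 1, c n u v = 1)
    (hcmarg₂ : ∀ n, 1 ≤ n → ∀ u ∈ Set.Icc (0 : ℝ) 1, ∫ v in Set.Icc (0 : ℝ) 1, c n u v = 1)
    (κ : ∀ n, Kernel (Fin n → ℝ) ℝ) [∀ n, IsMarkovKernel (κ n)]
    (hκ : ∀ n (x : Fin n → ℝ),
      κ n x = volume.withDensity (fun z => ENNReal.ofReal (hmwDensity f0 c n x z)))
    (P : Measure (ℕ → ℝ)) [IsProbabilityMeasure P] (hP : IsStrategyLaw κ P) :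
    CID P (fun n ω => ω n) := by
  have hnorm := hmw_norm f0 c κ hκ
  have hstep : ∀ m (x : Fin m → ℝ) (A : Set ℝ), MeasurableSet A →
      ∫⁻ y, κ (m+1) (Fin.snoc x y) A ∂(κ m x) = κ m x A :=
    fun m x A hA => hmw_step f0 c hf0meas hf0pos hcmeas hcpos hcmarg₂ κ hκ m x hA
  constructor
  · exact law_eval κ hstep P hP
  · intro n m hn hnm A hA
    exact (cid_condexp κ hstep P hP n m hnm hA).symm.trans
      (cid_condexp κ hstep P hP n n le_rfl hA)

end PredictiveBayes
end

section
/- Let T be a predictable stopping time, β a strategy such that P_β is exchangeable, and q_n : S^n → [0,1] measurable functions. Define the strategy σ by σ_0 = β_0, σ_1 = β_1, and for n ≥ 1, x ∈ S^n, y ∈ S: σ_{n+1}(x, y) = β_{n+1}(x, y) if T > n+1 (an event depending only on x), and σ_{n+1}(x, y) = q_n(x) σ_n(x) + (1 − q_n(x)) δ_y if T ≤ n+1. Then the coordinate process X is conditionally identically distributed (c.i.d.) under P_σ. -/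
open MeasureTheory ProbabilityTheory

namespace PredictiveBayes

variable {S : Type*} [MeasurableSpace S]

/-- The process `Y` is exchangeable under `P`. -/
def Exchangeable {Ω : Type*} [MeasurableSpace Ω] (P : Measure Ω) (Y : ℕ → Ω → S) : Prop :=
  ∀ (n : ℕ) (e : Equiv.Perm (Fin n)),
    P.map (fun ω (i : Fin n) => Y (e i) ω) = P.map (fun ω (i : Fin n) => Y i ω)

/-- Given the sets `A n` with `{T = n+1} = {(x_1,…,x_n) ∈ A n}` for the predictable
stopping time `T`, `stoppedBy A n x` says that `T ≤ n + 1` on the cylinder determined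
by the first `n` coordinates `x ∈ Sⁿ` (equivalently, `T = j + 1` for some `1 ≤ j ≤ n`). -/
def stoppedBy (A : ∀ n, Set (Fin n → S)) (n : ℕ) (x : Fin n → S) : Prop :=
  ∃ j : Fin n,
    (fun i : Fin ((j : ℕ) + 1) => x (Fin.castLE (by have := j.isLt; omega) i)) ∈ A ((j : ℕ) + 1)

open scoped ENNReal

lemma measurable_snocFun {n : ℕ} :
    Measurable (fun p : (Fin n → S) × S => (Fin.snoc p.1 p.2 : Fin (n+1) → S)) := by
  apply measurable_pi_lambda
  intro i
  induction i using Fin.lastCases with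
  | last => simpa using measurable_snd
  | cast j => simpa [Function.comp_def] using (measurable_pi_apply j).comp measurable_fst

lemma measurable_snoc_left {n : ℕ} (x : Fin n → S) :
    Measurable (fun y : S => (Fin.snoc x y : Fin (n+1) → S)) :=
  measurable_snocFun.comp measurable_prodMk_left

lemma measurable_snocMap {n : ℕ} (κn : Kernel (Fin n → S) S) [IsSFiniteKernel κn] :
    Measurable (fun x : Fin n → S => (κn x).map (fun y : S => (Fin.snoc x y : Fin (n+1) → S))) := by
  rw [Measure.measurable_measure]
  intro s hs
  have : ∀ x : Fin n → S, (κn x).map (fun y : S => (Fin.snoc x y : Fin (n+1) → S)) s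
      = κn x (Prod.mk x ⁻¹' ((fun p : (Fin n → S) × S => (Fin.snoc p.1 p.2 : Fin (n+1) → S)) ⁻¹' s)) := by
    intro x
    rw [Measure.map_apply (measurable_snoc_left x) hs]
    rfl
  simp_rw [this]
  exact Kernel.measurable_kernel_prodMk_left (measurable_snocFun hs)

lemma isProbabilityMeasure_stratFDD (κ : ∀ n, Kernel (Fin n → S) S) [∀ n, IsMarkovKernel (κ n)] :
    ∀ n, IsProbabilityMeasure (stratFDD κ n) := by
  intro n
  induction n with
  | zero => exact Measure.dirac.isProbabilityMeasure
  | succ n ih =>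
    constructor
    rw [stratFDD, Measure.bind_apply MeasurableSet.univ (measurable_snocMap (κ n)).aemeasurable]
    have : ∀ x : Fin n → S, ((κ n) x).map (fun y : S => (Fin.snoc x y : Fin (n+1) → S)) Set.univ = 1 := by
      intro x
      rw [Measure.map_apply (measurable_snoc_left x) MeasurableSet.univ]
      simp
    simp_rw [this]
    simpa using (ih.measure_univ)

lemma stratFDD_succ (κ : ∀ n, Kernel (Fin n → S) S) [∀ n, IsMarkovKernel (κ n)] (n : ℕ) :
    stratFDD κ (n+1) = ((stratFDD κ n) ⊗ₘ (κ n)).map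
      (fun p : (Fin n → S) × S => (Fin.snoc p.1 p.2 : Fin (n+1) → S)) := by
  haveI := isProbabilityMeasure_stratFDD κ n
  ext s hs
  rw [stratFDD, Measure.bind_apply hs (measurable_snocMap (κ n)).aemeasurable,
    Measure.map_apply measurable_snocFun hs, Measure.compProd_apply (measurable_snocFun hs)]
  congr 1
  funext x
  rw [Measure.map_apply (measurable_snoc_left x) hs]
  rfl


/-- the pair (first k coordinates, last coordinate) -/
def lastPair (k : ℕ) : (Fin (k+1) → S) → (Fin k → S) × S :=
  fun w => (Fin.init w, w (Fin.last k))

lemma measurable_lastPair {k : ℕ} : Measurable (lastPair k : (Fin (k+1) → S) → _) :=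
  (measurable_pi_lambda _ (fun i => measurable_pi_apply _)).prodMk (measurable_pi_apply _)

lemma measurable_proj {k : ℕ} : Measurable (fun ω : ℕ → S => (fun i : Fin k => ω i)) :=
  measurable_pi_lambda _ (fun i => measurable_pi_apply _)

lemma lastPair_snoc {k : ℕ} (p : (Fin k → S) × S) : lastPair k (Fin.snoc p.1 p.2) = p := by
  simp [lastPair, Fin.init_snoc]

lemma map_lastPair_stratFDD (κ : ∀ n, Kernel (Fin n → S) S) [∀ n, IsMarkovKernel (κ n)] (k : ℕ) :
    (stratFDD κ (k+1)).map (lastPair k) = (stratFDD κ k) ⊗ₘ (κ k) := by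
  rw [stratFDD_succ, Measure.map_map measurable_lastPair measurable_snocFun]
  have : (lastPair k ∘ fun p : (Fin k → S) × S => (Fin.snoc p.1 p.2 : Fin (k+1) → S)) = id := by
    funext p; exact lastPair_snoc p
  rw [this, Measure.map_id]

/-- joint law of first k coordinates and coordinate k. -/
lemma joint_law (κ : ∀ n, Kernel (Fin n → S) S) [∀ n, IsMarkovKernel (κ n)]
    (P : Measure (ℕ → S)) (hP : IsStrategyLaw κ P) (k : ℕ) :
    P.map (fun ω => ((fun i : Fin k => ω i), ω k)) = (stratFDD κ k) ⊗ₘ (κ k) := by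
  rw [← map_lastPair_stratFDD, ← hP (k+1), Measure.map_map measurable_lastPair measurable_proj]
  rfl


/-- kernel x ↦ law of Y_{k+1} given the first k coordinates equal to x -/
noncomputable def nextStep (κ : ∀ n, Kernel (Fin n → S) S) [∀ n, IsMarkovKernel (κ n)] (k : ℕ) :
    Kernel (Fin k → S) S :=
  Kernel.snd ((κ k) ⊗ₖ ((κ (k+1)).comap
    (fun p : (Fin k → S) × S => (Fin.snoc p.1 p.2 : Fin (k+1) → S)) measurable_snocFun))

instance (κ : ∀ n, Kernel (Fin n → S) S) [∀ n, IsMarkovKernel (κ n)] (k : ℕ) :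
    IsMarkovKernel (nextStep κ k) := by
  rw [nextStep]; infer_instance

lemma nextStep_apply (κ : ∀ n, Kernel (Fin n → S) S) [∀ n, IsMarkovKernel (κ n)] (k : ℕ)
    (x : Fin k → S) {t : Set S} (ht : MeasurableSet t) :
    nextStep κ k x t = ∫⁻ y, κ (k+1) (Fin.snoc x y) t ∂(κ k x) := by
  rw [nextStep, Kernel.snd_apply' _ _ ht, Kernel.compProd_apply]
  · simp [Kernel.comap_apply]; rfl
  · exact measurable_snd ht

lemma joint_law_next (κ : ∀ n, Kernel (Fin n → S) S) [∀ n, IsMarkovKernel (κ n)]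
    (P : Measure (ℕ → S)) (hP : IsStrategyLaw κ P) (k : ℕ) :
    P.map (fun ω => ((fun i : Fin k => ω i), ω (k+1))) = (stratFDD κ k) ⊗ₘ (nextStep κ k) := by
  haveI := isProbabilityMeasure_stratFDD κ k
  haveI := isProbabilityMeasure_stratFDD κ (k+1)
  -- the projection map on finite segments
  set m2 : (Fin (k+2) → S) → (Fin k → S) × S :=
    fun w => ((fun i : Fin k => w (Fin.castLE (by omega) i)), w (Fin.last (k+1))) with hm2
  have hm2meas : Measurable m2 :=
    (measurable_pi_lambda _ (fun i => measurable_pi_apply _)).prodMk (measurable_pi_apply _)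
  have h1 : P.map (fun ω => ((fun i : Fin k => ω i), ω (k+1)))
      = (stratFDD κ (k+2)).map m2 := by
    rw [← hP (k+2), Measure.map_map hm2meas measurable_proj]
    rfl
  rw [h1]
  ext s hs
  rw [Measure.map_apply hm2meas hs, Measure.compProd_apply hs]
  -- unfold stratFDD (k+2)
  show (stratFDD κ (k+1)).bind (fun x => ((κ (k+1)) x).map (Fin.snoc x)) (m2 ⁻¹' s) = _
  rw [Measure.bind_apply (hm2meas hs) (measurable_snocMap (κ (k+1))).aemeasurable]
  -- integrand over μ_{k+1}
  have hinteg : ∀ x : Fin (k+1) → S,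
      ((κ (k+1)) x).map (fun y : S => (Fin.snoc x y : Fin (k+2) → S)) (m2 ⁻¹' s)
        = (κ (k+1)) x (Prod.mk x ⁻¹'
            ((fun p : (Fin (k+1) → S) × S => m2 (Fin.snoc p.1 p.2)) ⁻¹' s)) := by
    intro x
    rw [Measure.map_apply (measurable_snoc_left x) (hm2meas hs)]
    rfl
  simp_rw [hinteg]
  set t : Set ((Fin (k+1) → S) × S) := (fun p : (Fin (k+1) → S) × S => m2 (Fin.snoc p.1 p.2)) ⁻¹' s
    with htdef
  have htmeas : MeasurableSet t := (hm2meas.comp measurable_snocFun) hs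
  have hfmeas : Measurable (fun x : Fin (k+1) → S => (κ (k+1)) x (Prod.mk x ⁻¹' t)) :=
    Kernel.measurable_kernel_prodMk_left htmeas
  -- second bind
  rw [show (stratFDD κ (k+1) : Measure (Fin (k+1) → S))
      = (stratFDD κ k).bind (fun x => ((κ k) x).map
        (fun y : S => (Fin.snoc x y : Fin (k+1) → S))) from rfl,
    Measure.lintegral_bind (measurable_snocMap (κ k)).aemeasurable hfmeas.aemeasurable]
  refine lintegral_congr fun x => ?_
  rw [lintegral_map hfmeas (measurable_snoc_left x),
    nextStep_apply κ k x (measurable_prodMk_left hs)]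
  refine lintegral_congr fun y => ?_
  congr 1
  ext z
  show m2 (Fin.snoc (Fin.snoc x y) z) ∈ s ↔ (x, z) ∈ s
  have e1 : (fun i : Fin k => (Fin.snoc (Fin.snoc x y : Fin (k+1) → S) z : Fin (k+2) → S)
      (Fin.castLE (by omega) i)) = x := by
    funext i
    have : (Fin.castLE (by omega : k ≤ k + 2) i)
        = Fin.castSucc (Fin.castSucc i) := by
      ext; simp
    rw [this, Fin.snoc_castSucc, Fin.snoc_castSucc]
  have e2 : (Fin.snoc (Fin.snoc x y : Fin (k+1) → S) z : Fin (k+2) → S) (Fin.last (k+1)) = z :=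
    Fin.snoc_last _ _
  rw [hm2]
  simp only [e1, e2]


lemma exch_swap (Q : Measure (ℕ → S)) (hQexch : Exchangeable Q (fun n ω => ω n)) (k : ℕ) :
    Q.map (fun ω : ℕ → S => ((fun i : Fin k => ω i), ω (k+1)))
      = Q.map (fun ω : ℕ → S => ((fun i : Fin k => ω i), ω k)) := by
  set a : Fin (k+2) := ⟨k, by omega⟩
  set b : Fin (k+2) := ⟨k+1, by omega⟩
  set e : Equiv.Perm (Fin (k+2)) := Equiv.swap a b with he
  have hQe := hQexch (k+2) e
  set m2 : (Fin (k+2) → S) → (Fin k → S) × S :=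
    fun w => ((fun i : Fin k => w (Fin.castLE (by omega) i)), w (Fin.last (k+1))) with hm2
  have hm2meas : Measurable m2 :=
    (measurable_pi_lambda _ (fun i => measurable_pi_apply _)).prodMk (measurable_pi_apply _)
  have hfe : Measurable (fun ω : ℕ → S => (fun i : Fin (k+2) => ω (e i))) :=
    measurable_pi_lambda _ (fun i => measurable_pi_apply _)
  have := congrArg (fun ν : Measure (Fin (k+2) → S) => ν.map m2) hQe
  simp only at this
  rw [Measure.map_map hm2meas hfe, Measure.map_map hm2meas measurable_proj] at this
  have hL : (m2 ∘ fun ω : ℕ → S => (fun i : Fin (k+2) => ω (e i)))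
      = fun ω : ℕ → S => ((fun i : Fin k => ω i), ω k) := by
    funext ω
    refine Prod.ext ?_ ?_
    · funext i
      show ω ((e (Fin.castLE (by omega) i) : Fin (k+2)) : ℕ) = ω i
      have h1 : e (Fin.castLE (by omega) i) = Fin.castLE (by omega) i := by
        rw [he]
        refine Equiv.swap_apply_of_ne_of_ne ?_ ?_ <;>
          · refine Fin.ne_of_val_ne ?_
            have := i.isLt; simp only [Fin.coe_castLE, a, b]
            omega
      rw [h1]
      rfl
    · show ω ((e (Fin.last (k+1)) : Fin (k+2)) : ℕ) = ω k
      have hlast : (Fin.last (k+1) : Fin (k+2)) = b := rfl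
      have h1 : e (Fin.last (k+1)) = a := by rw [he, hlast, Equiv.swap_apply_right]
      rw [h1]
  have hR : (m2 ∘ fun ω : ℕ → S => (fun i : Fin (k+2) => ω i))
      = fun ω : ℕ → S => ((fun i : Fin k => ω i), ω (k+1)) := rfl
  rw [hL, hR] at this
  exact this.symm

lemma beta_cid {S : Type*} [MeasurableSpace S] [StandardBorelSpace S] [Nonempty S]
    (β : ∀ n, Kernel (Fin n → S) S) [∀ n, IsMarkovKernel (β n)]
    (Q : Measure (ℕ → S)) [IsProbabilityMeasure Q] (hQ : IsStrategyLaw β Q)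
    (hQexch : Exchangeable Q (fun n ω => ω n)) (k : ℕ) :
    ∀ᵐ x ∂(stratFDD β k), nextStep β k x = β k x := by
  haveI := isProbabilityMeasure_stratFDD β k
  have h1 : (stratFDD β k) ⊗ₘ (nextStep β k) = (stratFDD β k) ⊗ₘ (β k) := by
    rw [← joint_law_next β Q hQ k, ← joint_law β Q hQ k]
    exact exch_swap Q hQexch k
  set ρ : Measure ((Fin k → S) × S) := (stratFDD β k) ⊗ₘ (β k) with hρ
  haveI : IsProbabilityMeasure ρ := by
    constructor
    rw [hρ, Measure.compProd_apply_univ]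
    exact measure_univ
  have hfst : ρ.fst = stratFDD β k := Measure.fst_compProd _ _
  have hβ : ∀ᵐ x ∂ρ.fst, β k x = ρ.condKernel x :=
    eq_condKernel_of_measure_eq_compProd _ (by rw [hfst])
  have hν : ∀ᵐ x ∂ρ.fst, nextStep β k x = ρ.condKernel x :=
    eq_condKernel_of_measure_eq_compProd _ (by rw [hfst, ← h1])
  rw [hfst] at hβ hν
  filter_upwards [hβ, hν] with x hx1 hx2
  rw [hx2, hx1]


lemma measurableSet_stoppedBy (A : ∀ n, Set (Fin n → S)) (hA : ∀ n, MeasurableSet (A n))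
    (n : ℕ) : MeasurableSet {x : Fin n → S | stoppedBy A n x} := by
  have : {x : Fin n → S | stoppedBy A n x}
      = ⋃ j : Fin n, (fun (x : Fin n → S) (i : Fin ((j : ℕ) + 1)) =>
          x (Fin.castLE (by have := j.isLt; omega) i)) ⁻¹' A ((j : ℕ) + 1) := by
    ext x
    simp [stoppedBy, Set.mem_iUnion, Set.mem_preimage]
  rw [this]
  exact MeasurableSet.iUnion fun j =>
    (measurable_pi_lambda _ (fun i => measurable_pi_apply _)) (hA _)

lemma stoppedBy_succ (A : ∀ n, Set (Fin n → S)) {n : ℕ} (w : Fin (n+1) → S)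
    (h : stoppedBy A n (Fin.init w)) : stoppedBy A (n+1) w := by
  obtain ⟨j, hj⟩ := h
  exact ⟨⟨(j : ℕ), by omega⟩, hj⟩

lemma stoppedBy_snoc (A : ∀ n, Set (Fin n → S)) {n : ℕ} (x : Fin n → S) (y : S)
    (h : stoppedBy A n x) : stoppedBy A (n+1) (Fin.snoc x y) :=
  stoppedBy_succ A _ (by rwa [Fin.init_snoc])

section Main
variable (β κ : ∀ n, Kernel (Fin n → S) S) [∀ n, IsMarkovKernel (β n)] [∀ n, IsMarkovKernel (κ n)]
  (A : ∀ n, Set (Fin n → S))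
  (q : ∀ n, (Fin n → S) → ℝ)

/-- on the unstopped region the kernels agree. -/
lemma kernel_eq_of_not_stopped
    (hκ1 : κ 1 = β 1)
    (hκ_before : ∀ n : ℕ, 1 ≤ n → ∀ w : Fin (n + 1) → S,
      ¬ stoppedBy A n (Fin.init w) → κ (n + 1) w = β (n + 1) w)
    {k : ℕ} (hk : 1 ≤ k) (x : Fin k → S) (hx : ¬ stoppedBy A k x) : κ k x = β k x := by
  match k, hk with
  | 1, _ => rw [hκ1]
  | (n+2), _ =>
    rw [hκ_before (n+1) (by omega) x]
    intro h
    exact hx (stoppedBy_succ A x h)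

lemma nextStep_eq_of_stopped
    (hq01 : ∀ n x, q n x ∈ Set.Icc (0 : ℝ) 1)
    (hκ_after : ∀ n : ℕ, 1 ≤ n → ∀ w : Fin (n + 1) → S,
      stoppedBy A n (Fin.init w) →
        κ (n + 1) w = ENNReal.ofReal (q n (Fin.init w)) • κ n (Fin.init w) +
          ENNReal.ofReal (1 - q n (Fin.init w)) • Measure.dirac (w (Fin.last n)))
    {k : ℕ} (hk : 1 ≤ k) (x : Fin k → S) (hx : stoppedBy A k x) :
    nextStep κ k x = κ k x := by
  ext t ht
  rw [nextStep_apply κ k x ht]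
  have hrw : ∀ y : S, κ (k+1) (Fin.snoc x y) t
      = ENNReal.ofReal (q k x) * κ k x t + ENNReal.ofReal (1 - q k x) * Set.indicator t 1 y := by
    intro y
    rw [hκ_after k hk (Fin.snoc x y) (by rwa [Fin.init_snoc])]
    simp only [Fin.init_snoc, Fin.snoc_last, Measure.coe_add, Measure.coe_smul, Pi.add_apply,
      Pi.smul_apply, smul_eq_mul]
    rw [Measure.dirac_apply' y ht]
  simp_rw [hrw]
  rw [lintegral_add_right _ ((measurable_one.indicator ht).const_mul _), lintegral_const_mul _
    (measurable_one.indicator ht), lintegral_indicator_one ht, lintegral_const]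
  simp only [measure_univ, mul_one]
  rw [← add_mul, ← ENNReal.ofReal_add (hq01 k x).1 (by have := (hq01 k x).2; linarith)]
  simp

lemma nextStep_eq_of_not_stopped
    (hκ1 : κ 1 = β 1)
    (hκ_before : ∀ n : ℕ, 1 ≤ n → ∀ w : Fin (n + 1) → S,
      ¬ stoppedBy A n (Fin.init w) → κ (n + 1) w = β (n + 1) w)
    {k : ℕ} (hk : 1 ≤ k) (x : Fin k → S) (hx : ¬ stoppedBy A k x) :
    nextStep κ k x = nextStep β k x := by
  ext t ht
  rw [nextStep_apply κ k x ht, nextStep_apply β k x ht,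
    kernel_eq_of_not_stopped β κ A hκ1 hκ_before hk x hx]
  refine lintegral_congr fun y => ?_
  rw [hκ_before k hk (Fin.snoc x y) (by rwa [Fin.init_snoc])]

lemma restrict_stratFDD_eq
    (hκ0 : κ 0 = β 0) (hκ1 : κ 1 = β 1)
    (hA : ∀ n, MeasurableSet (A n))
    (hκ_before : ∀ n : ℕ, 1 ≤ n → ∀ w : Fin (n + 1) → S,
      ¬ stoppedBy A n (Fin.init w) → κ (n + 1) w = β (n + 1) w) :
    ∀ k : ℕ, 1 ≤ k →
      (stratFDD κ k).restrict {x | ¬ stoppedBy A k x}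
        = (stratFDD β k).restrict {x | ¬ stoppedBy A k x} := by
  have h1 : stratFDD κ 1 = stratFDD β 1 := by
    show (stratFDD κ 0).bind _ = (stratFDD β 0).bind _
    rw [hκ0]
    rfl
  intro k
  induction k with
  | zero => omega
  | succ k ih =>
    intro _
    rcases Nat.eq_zero_or_pos k with h0 | h0
    · subst h0
      rw [show (stratFDD κ (0+1) : Measure (Fin (0+1) → S)) = stratFDD β (0+1) from h1]
    have hk : 1 ≤ k := h0
    have hU' : MeasurableSet {x : Fin (k+1) → S | ¬ stoppedBy A (k+1) x} :=
      (measurableSet_stoppedBy A hA (k+1)).compl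
    have hU : MeasurableSet {x : Fin k → S | ¬ stoppedBy A k x} :=
      (measurableSet_stoppedBy A hA k).compl
    ext s hs
    rw [Measure.restrict_apply hs, Measure.restrict_apply hs]
    show (stratFDD κ k).bind _ _ = (stratFDD β k).bind _ _
    rw [Measure.bind_apply (hs.inter hU') (measurable_snocMap (κ k)).aemeasurable,
      Measure.bind_apply (hs.inter hU') (measurable_snocMap (β k)).aemeasurable]
    set fβ : (Fin k → S) → ℝ≥0∞ := fun x =>
      ((β k) x).map (fun y : S => (Fin.snoc x y : Fin (k+1) → S))
        (s ∩ {x | ¬ stoppedBy A (k+1) x}) with hfβ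
    have hzero : ∀ x : Fin k → S, stoppedBy A k x →
        ∀ (ν : Measure S), ν.map (fun y : S => (Fin.snoc x y : Fin (k+1) → S))
          (s ∩ {x | ¬ stoppedBy A (k+1) x}) = 0 := by
      intro x hx ν
      rw [Measure.map_apply (measurable_snoc_left x) (hs.inter hU')]
      convert measure_empty
      · ext y
        simp only [Set.mem_preimage, Set.mem_inter_iff, Set.mem_setOf_eq, Set.mem_empty_iff_false,
          iff_false, not_and, not_not]
        exact fun _ => stoppedBy_snoc A x y hx
      · infer_instance
    have heq : (fun x : Fin k → S =>
        ((κ k) x).map (fun y : S => (Fin.snoc x y : Fin (k+1) → S))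
          (s ∩ {x | ¬ stoppedBy A (k+1) x})) = fβ := by
      funext x
      by_cases hx : stoppedBy A k x
      · rw [hzero x hx, hfβ]
        exact (hzero x hx _).symm
      · rw [hfβ]
        simp only
        rw [kernel_eq_of_not_stopped β κ A hκ1 hκ_before hk x hx]
    rw [heq]
    have hind : fβ = Set.indicator {x : Fin k → S | ¬ stoppedBy A k x} fβ := by
      funext x
      by_cases hx : stoppedBy A k x
      · rw [Set.indicator_of_notMem (by simpa using hx), hfβ]
        exact hzero x hx _
      · rw [Set.indicator_of_mem (by simpa using hx)]
    have hfβmeas : Measurable fβ :=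
      (Measure.measurable_coe (hs.inter hU')).comp (measurable_snocMap (β k))
    rw [hind, lintegral_indicator hU, lintegral_indicator hU,
      ih hk]

end Main

lemma measurable_pairF {n m : ℕ} :
    Measurable (fun ω : ℕ → S => ((fun i : Fin n => ω i), ω m)) :=
  measurable_proj.prodMk (measurable_pi_apply _)


/-- **Theorem (change points).** Let `T` be a predictable stopping time (with values in
`{2, 3, …, ∞}`), `β` a strategy whose Ionescu–Tulcea law is exchangeable, and
`q_n : Sⁿ → [0,1]` measurable. Define the strategy `σ` (here `κ`) by `σ_0 = β_0`,
`σ_1 = β_1` and, for `n ≥ 1`, `σ_{n+1}(x, y) = β_{n+1}(x, y)` if `T > n + 1`, while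
`σ_{n+1}(x, y) = q_n(x) σ_n(x) + (1 - q_n(x)) δ_y` if `T ≤ n + 1`. Then the coordinate
process is c.i.d. under `P_σ`. -/
theorem changePoint_cid {S : Type*} [MeasurableSpace S] [StandardBorelSpace S] [Nonempty S]
    (β κ : ∀ n, Kernel (Fin n → S) S) [∀ n, IsMarkovKernel (β n)] [∀ n, IsMarkovKernel (κ n)]
    (T : (ℕ → S) → ℕ∞) (hT2 : ∀ ω, 2 ≤ T ω)
    (A : ∀ n, Set (Fin n → S)) (hAmeas : ∀ n, MeasurableSet (A n))
    (hTA : ∀ n : ℕ, 1 ≤ n →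
      {ω : ℕ → S | T ω = ((n + 1 : ℕ) : ℕ∞)} = {ω : ℕ → S | (fun i : Fin n => ω i) ∈ A n})
    (q : ∀ n, (Fin n → S) → ℝ) (hqmeas : ∀ n, Measurable (q n))
    (hq01 : ∀ n x, q n x ∈ Set.Icc (0 : ℝ) 1)
    (hκ0 : κ 0 = β 0) (hκ1 : κ 1 = β 1)
    (hκ_before : ∀ n : ℕ, 1 ≤ n → ∀ w : Fin (n + 1) → S,
      ¬ stoppedBy A n (Fin.init w) → κ (n + 1) w = β (n + 1) w)
    (hκ_after : ∀ n : ℕ, 1 ≤ n → ∀ w : Fin (n + 1) → S,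
      stoppedBy A n (Fin.init w) →
        κ (n + 1) w = ENNReal.ofReal (q n (Fin.init w)) • κ n (Fin.init w) +
          ENNReal.ofReal (1 - q n (Fin.init w)) • Measure.dirac (w (Fin.last n)))
    (Q : Measure (ℕ → S)) [IsProbabilityMeasure Q] (hQ : IsStrategyLaw β Q)
    (hQexch : Exchangeable Q (fun n ω => ω n))
    (P : Measure (ℕ → S)) [IsProbabilityMeasure P] (hP : IsStrategyLaw κ P) :
    CID P (fun n ω => ω n) := by
  -- the a.e. kernel identity for κ
  have hcidker : ∀ k : ℕ, 1 ≤ k → ∀ᵐ x ∂(stratFDD κ k), nextStep κ k x = κ k x := by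
    intro k hk
    have hres := restrict_stratFDD_eq β κ A hκ0 hκ1 hAmeas hκ_before k hk
    have hβ := beta_cid β Q hQ hQexch k
    have h2 : ∀ᵐ x ∂(stratFDD κ k), ¬ stoppedBy A k x → nextStep κ k x = κ k x := by
      have h3 : ∀ᵐ x ∂((stratFDD κ k).restrict {x | ¬ stoppedBy A k x}),
          nextStep β k x = β k x := by
        rw [hres]; exact ae_restrict_of_ae hβ
      have h4 := ae_imp_of_ae_restrict h3
      filter_upwards [h4] with x hx hxU
      rw [nextStep_eq_of_not_stopped β κ A hκ1 hκ_before hk x hxU,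
        kernel_eq_of_not_stopped β κ A hκ1 hκ_before hk x hxU]
      exact hx hxU
    filter_upwards [h2] with x hx
    by_cases hstop : stoppedBy A k x
    · exact nextStep_eq_of_stopped κ A q hq01 hκ_after hk x hstop
    · exact hx hstop
  -- one step joint law stability
  have hstep : ∀ k : ℕ, 1 ≤ k →
      P.map (fun ω : ℕ → S => ((fun i : Fin k => ω i), ω (k+1)))
        = P.map (fun ω : ℕ → S => ((fun i : Fin k => ω i), ω k)) := by
    intro k hk
    rw [joint_law_next κ P hP k, joint_law κ P hP k]
    exact Measure.compProd_congr (hcidker k hk)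
  -- projection of pair laws
  have hproj : ∀ (n k m : ℕ) (h : n ≤ k),
      P.map (fun ω : ℕ → S => ((fun i : Fin n => ω i), ω m))
        = (P.map (fun ω : ℕ → S => ((fun i : Fin k => ω i), ω m))).map
            (fun p : (Fin k → S) × S => ((fun i : Fin n => p.1 (Fin.castLE h i)), p.2)) := by
    intro n k m h
    have hg : Measurable (fun p : (Fin k → S) × S =>
        ((fun i : Fin n => p.1 (Fin.castLE h i)), p.2)) :=
      (measurable_pi_lambda _ (fun i => (measurable_pi_apply _).comp measurable_fst)).prodMk
        measurable_snd
    rw [Measure.map_map hg measurable_pairF]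
    rfl
  -- stability for all m ≥ n
  have hjoint : ∀ n : ℕ, 1 ≤ n → ∀ m : ℕ, n ≤ m →
      P.map (fun ω : ℕ → S => ((fun i : Fin n => ω i), ω m))
        = P.map (fun ω : ℕ → S => ((fun i : Fin n => ω i), ω n)) := by
    intro n hn m hm
    induction m, hm using Nat.le_induction with
    | base => rfl
    | succ m hm ih =>
      rw [hproj n m (m+1) hm, hstep m (le_trans hn hm), ← hproj n m m hm]
      exact ih
  constructor
  · -- part 1
    have e1 : stratFDD κ 1 = stratFDD β 1 := by
      show (stratFDD κ 0).bind _ = (stratFDD β 0).bind _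
      rw [hκ0]
      rfl
    have e2 : stratFDD κ 2 = stratFDD β 2 := by
      show (stratFDD κ 1).bind _ = (stratFDD β 1).bind _
      rw [e1, hκ1]
    have hPQ : P.map (fun ω (i : Fin 2) => ω i) = Q.map (fun ω (i : Fin 2) => ω i) := by
      rw [hP 2, hQ 2, e2]
    have hmap : ∀ (R : Measure (ℕ → S)) (j : ℕ) (hj : j < 2),
        R.map (fun ω : ℕ → S => ω j)
          = (R.map (fun ω (i : Fin 2) => ω i)).map (fun w : Fin 2 → S => w ⟨j, hj⟩) := by
      intro R j hj
      rw [Measure.map_map (measurable_pi_apply _) measurable_proj]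
      rfl
    have hQ10 : Q.map (fun ω : ℕ → S => ω 1) = Q.map (fun ω : ℕ → S => ω 0) := by
      have he : Q.map (fun (ω : ℕ → S) (i : Fin 2) => ω ((Equiv.swap (0 : Fin 2) 1 i : Fin 2) : ℕ))
          = Q.map (fun (ω : ℕ → S) (i : Fin 2) => ω i) := hQexch 2 (Equiv.swap 0 1)
      have hfe : Measurable (fun (ω : ℕ → S) (i : Fin 2) =>
          ω ((Equiv.swap (0 : Fin 2) 1 i : Fin 2) : ℕ)) :=
        measurable_pi_lambda _ (fun i => measurable_pi_apply _)
      have h1 : Q.map (fun ω : ℕ → S => ω 1)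
          = (Q.map (fun (ω : ℕ → S) (i : Fin 2) =>
              ω ((Equiv.swap (0 : Fin 2) 1 i : Fin 2) : ℕ))).map (fun w : Fin 2 → S => w 0) := by
        rw [Measure.map_map (measurable_pi_apply _) hfe]
        have : ((fun w : Fin 2 → S => w 0) ∘ fun (ω : ℕ → S) (i : Fin 2) =>
            ω ((Equiv.swap (0 : Fin 2) 1 i : Fin 2) : ℕ))
            = fun ω : ℕ → S => ω (((Equiv.swap (0 : Fin 2) 1 0 : Fin 2)) : ℕ) := rfl
        rw [this, Equiv.swap_apply_left]
        rfl
      rw [h1, he, Measure.map_map (measurable_pi_apply _) measurable_proj]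
      rfl
    show P.map (fun ω : ℕ → S => ω 1) = P.map (fun ω : ℕ → S => ω 0)
    have k1 : P.map (fun ω : ℕ → S => ω 1) = Q.map (fun ω : ℕ → S => ω 1) := by
      rw [hmap P 1 (by omega), hPQ, ← hmap Q 1 (by omega)]
    have k0 : P.map (fun ω : ℕ → S => ω 0) = Q.map (fun ω : ℕ → S => ω 0) := by
      rw [hmap P 0 (by omega), hPQ, ← hmap Q 0 (by omega)]
    rw [k1, k0, hQ10]
  · -- part 2: conditional expectations
    intro n m hn hnm A hA
    have hmle : (MeasurableSpace.comap (fun (ω : ℕ → S) (i : Fin n) => ω i) inferInstance)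
        ≤ (inferInstance : MeasurableSpace (ℕ → S)) := measurable_proj.comap_le
    haveI : IsFiniteMeasure (P.trim hmle) := isFiniteMeasure_trim hmle
    haveI : SigmaFinite (P.trim hmle) := inferInstance
    have hkey : ∀ (s : Set (ℕ → S)),
        MeasurableSet[MeasurableSpace.comap (fun (ω : ℕ → S) (i : Fin n) => ω i) inferInstance] s
        → ∀ j : ℕ, n ≤ j →
        P (s ∩ ((fun ω : ℕ → S => ω j) ⁻¹' A))
          = P (s ∩ ((fun ω : ℕ → S => ω n) ⁻¹' A)) := by
      intro s hs j hj
      obtain ⟨B, hB, rfl⟩ := hs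
      have hint : ∀ j : ℕ,
          ((fun ω (i : Fin n) => ω i) ⁻¹' B) ∩ ((fun ω : ℕ → S => ω j) ⁻¹' A)
            = (fun ω : ℕ → S => ((fun i : Fin n => ω i), ω j)) ⁻¹' (B ×ˢ A) := by
        intro j; ext ω; simp [Set.mem_prod]
      rw [hint j, hint n, ← Measure.map_apply measurable_pairF (hB.prod hA),
        ← Measure.map_apply measurable_pairF (hB.prod hA), hjoint n hn j hj]
    have hintm : Integrable (Set.indicator ((fun ω : ℕ → S => ω m) ⁻¹' A)
        (fun _ => (1 : ℝ))) P :=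
      (integrable_const (1 : ℝ)).indicator ((measurable_pi_apply m) hA)
    have hintn : Integrable (Set.indicator ((fun ω : ℕ → S => ω n) ⁻¹' A)
        (fun _ => (1 : ℝ))) P :=
      (integrable_const (1 : ℝ)).indicator ((measurable_pi_apply n) hA)
    refine (ae_eq_condExp_of_forall_setIntegral_eq hmle hintm
      (fun s _ _ => integrable_condExp.integrableOn) (fun s hs hμs => ?_)
      (stronglyMeasurable_condExp.aestronglyMeasurable)).symm
    rw [setIntegral_condExp hmle hintn hs]
    have hsm : MeasurableSet s := hmle _ hs
    rw [setIntegral_indicator ((measurable_pi_apply n) hA),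
      setIntegral_indicator ((measurable_pi_apply m) hA),
      setIntegral_const, setIntegral_const, smul_eq_mul, mul_one, smul_eq_mul, mul_one, measureReal_def, measureReal_def,
      hkey s hs m hnm, hkey s hs n le_rfl]

end PredictiveBayes
end
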